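/- With the extended Fisher information matrix F̄(p) reordered as F̄₁(p) = P F̄(p) Pᵀ, B the incidence matrix of the oriented ranging graph, and Q(p) the 2|E|×2|E| block matrix of weighted diagonal matrices Q_{μν}(p), one has F̄₁(p) = (I₂ ⊗ B) Q(p) (I₂ ⊗ Bᵀ), where ⊗ denotes the Kronecker product and I₂ is the 2×2 identity matrix. -/
import Mathlib


open Matrix

/-- Euclidean distance between points `(x i, y i)` and `(x j, y j)`. -/
noncomputable def edist2 {N : ℕ} (x y : Fin N → ℝ) (i j : Fin N) : ℝ :=
  Real.sqrt ((x i - x j) ^ 2 + (y i - y j) ^ 2)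

/-- Off-diagonal 2×2 block `F_ij` of the Fisher information matrix. -/
noncomputable def offBlock {N : ℕ} (x y : Fin N → ℝ) (Adj : Fin N → Fin N → Bool)
    (σ α : ℝ) (i j : Fin N) : Matrix (Fin 2) (Fin 2) ℝ :=
  -((if Adj i j then (1 : ℝ) else 0) / (σ ^ 2 * edist2 x y i j ^ (2 * α))) •
    !![(x i - x j) ^ 2, (x i - x j) * (y i - y j);
       (x i - x j) * (y i - y j), (y i - y j) ^ 2]

/-- The 2×2 block of the extended FIM: `F_ii = -∑_{k ∈ N_i} F_ik`, `F_ij` off the diagonal. -/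
noncomputable def fimBlock {N : ℕ} (x y : Fin N → ℝ) (Adj : Fin N → Fin N → Bool)
    (σ α : ℝ) (i j : Fin N) : Matrix (Fin 2) (Fin 2) ℝ :=
  if i = j then
    -∑ k ∈ Finset.univ.filter (fun k => Adj i k = true), offBlock x y Adj σ α i k
  else offBlock x y Adj σ α i j

/-- Extended Fisher information matrix `F̄(p)`, indexed by (vertex, coordinate), i.e. in the
interleaved coordinate ordering `(x₁, y₁, …, x_N, y_N)`. -/
noncomputable def Fbar {N : ℕ} (x y : Fin N → ℝ) (Adj : Fin N → Fin N → Bool)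
    (σ α : ℝ) : Matrix (Fin N × Fin 2) (Fin N × Fin 2) ℝ :=
  Matrix.of fun r c => fimBlock x y Adj σ α r.1 c.1 r.2 c.2

/-- Permutation matrix reordering coordinates from `(x₁, y₁, …, x_N, y_N)` to
`(x₁, …, x_N, y₁, …, y_N)`. -/
def permP (N : ℕ) : Matrix (Fin 2 × Fin N) (Fin N × Fin 2) ℝ :=
  Matrix.of fun r c => if r = (c.2, c.1) then 1 else 0

/-- Reordered extended FIM `F̄₁(p) = P F̄(p) Pᵀ`. -/
noncomputable def Fbar1 {N : ℕ} (x y : Fin N → ℝ) (Adj : Fin N → Fin N → Bool)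
    (σ α : ℝ) : Matrix (Fin 2 × Fin N) (Fin 2 × Fin N) ℝ :=
  permP N * Fbar x y Adj σ α * (permP N)ᵀ


open Kronecker

/-- Incidence matrix `B` of the oriented graph with edges `e = (e1 e, e2 e)`. -/
def incB {N : ℕ} {ι : Type*} (e1 e2 : ι → Fin N) : Matrix (Fin N) ι ℝ :=
  Matrix.of fun i e => if i = e1 e then 1 else if i = e2 e then -1 else 0

/-- The 2|E|×2|E| block matrix `Q(p) = [[Q_xx, Q_xy], [Q_yx, Q_yy]]`, where `Q_μν(p)` is the
|E|×|E| diagonal matrix with diagonal entry `(μ_i-μ_j)(ν_i-ν_j)/(σ² d_ij^{2α})` for edge `(i,j)`. -/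
noncomputable def Qmat {N : ℕ} (x y : Fin N → ℝ) (σ α : ℝ) {ι : Type*} [DecidableEq ι]
    (e1 e2 : ι → Fin N) : Matrix (Fin 2 × ι) (Fin 2 × ι) ℝ :=
  Matrix.of fun r c =>
    if r.2 = c.2 then
      (![x, y] r.1 (e1 r.2) - ![x, y] r.1 (e2 r.2)) *
        (![x, y] c.1 (e1 r.2) - ![x, y] c.1 (e2 r.2)) /
        (σ ^ 2 * edist2 x y (e1 r.2) (e2 r.2) ^ (2 * α))
    else 0

lemma sum_edges {N : ℕ} {ι : Type*} [Fintype ι] [DecidableEq ι]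
    (Adj : Fin N → Fin N → Bool) (hsym : ∀ i j, Adj i j = Adj j i)
    (hirr : ∀ i, Adj i i = false)
    (e1 e2 : ι → Fin N) (hedge : ∀ e, Adj (e1 e) (e2 e) = true)
    (huniq : ∀ i j, Adj i j = true →
      ∃! e : ι, (e1 e = i ∧ e2 e = j) ∨ (e1 e = j ∧ e2 e = i))
    (g : Fin N → Fin N → ℝ) (hg : ∀ a b, g a b = g b a) (i j : Fin N) :
    ∑ e : ι, incB e1 e2 i e * incB e1 e2 j e * g (e1 e) (e2 e) =
      if i = j then ∑ k ∈ Finset.univ.filter (fun k => Adj i k = true), g i k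
      else if Adj i j then -(g i j) else 0 := by
  have hne : ∀ e, e1 e ≠ e2 e := by
    intro e h
    have h2 := hedge e
    rw [h, hirr] at h2
    exact absurd h2 (by simp)
  by_cases hij : i = j
  · subst hij
    simp only [if_pos rfl]
    have step1 : ∑ e : ι, incB e1 e2 i e * incB e1 e2 i e * g (e1 e) (e2 e) =
        ∑ e ∈ Finset.univ.filter (fun e => e1 e = i ∨ e2 e = i),
          g i (if e1 e = i then e2 e else e1 e) := by
      rw [Finset.sum_filter]
      refine Finset.sum_congr rfl fun e _ => ?_
      by_cases h1 : e1 e = i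
      · have h2 : e2 e ≠ i := fun h => hne e (h1.trans h.symm)
        simp [incB, h1.symm, fun h : i = e2 e => h2 h.symm, ← h1]
      · by_cases h2 : e2 e = i
        · have h1' : i ≠ e1 e := fun h => h1 h.symm
          simp only [incB, Matrix.of_apply, if_neg h1', if_pos h2.symm, if_pos (Or.inr h2),
            if_neg h1]
          rw [← h2, hg]
          ring
        · have hi1 : ¬ i = e1 e := fun h => h1 h.symm
          have hi2 : ¬ i = e2 e := fun h => h2 h.symm
          simp [incB, hi1, hi2, h1, h2]
    rw [step1]
    refine Finset.sum_bij' (i := fun e _ => if e1 e = i then e2 e else e1 e)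
      (j := fun k hk => (huniq i k (by simpa using hk)).choose) ?_ ?_ ?_ ?_ ?_
    · intro e he
      simp only [Finset.mem_filter, Finset.mem_univ, true_and] at he ⊢
      by_cases h1 : e1 e = i
      · rw [if_pos h1, ← h1]; exact hedge e
      · rcases he with h | h2
        · exact absurd h h1
        · rw [if_neg h1, ← h2, ← hsym]; exact hedge e
    · intro k hk
      simp only [Finset.mem_filter, Finset.mem_univ, true_and] at hk ⊢
      rcases (huniq i k hk).choose_spec.1 with ⟨h1, _⟩ | ⟨_, h2⟩
      · exact Or.inl h1
      · exact Or.inr h2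
    · intro e he
      simp only [Finset.mem_filter, Finset.mem_univ, true_and] at he
      -- uniqueness: e satisfies the predicate for (i, other e)
      set k := if e1 e = i then e2 e else e1 e with hk
      have hAdj : Adj i k = true := by
        by_cases h1 : e1 e = i
        · rw [hk, if_pos h1, ← h1]; exact hedge e
        · rcases he with h | h2
          · exact absurd h h1
          · rw [hk, if_neg h1, ← h2, ← hsym]; exact hedge e
      have hpred : (e1 e = i ∧ e2 e = k) ∨ (e1 e = k ∧ e2 e = i) := by
        by_cases h1 : e1 e = i
        · exact Or.inl ⟨h1, by rw [hk, if_pos h1]⟩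
        · rcases he with h | h2
          · exact absurd h h1
          · exact Or.inr ⟨by rw [hk, if_neg h1], h2⟩
      exact ((huniq i k hAdj).choose_spec.2 e hpred).symm
    · intro k hk
      simp only [Finset.mem_filter, Finset.mem_univ, true_and] at hk
      have hki : k ≠ i := by
        intro h; rw [h, hirr] at hk; exact absurd hk (by simp)
      show (if e1 ((huniq i k hk).choose) = i then e2 ((huniq i k hk).choose)
        else e1 ((huniq i k hk).choose)) = k
      rcases (huniq i k hk).choose_spec.1 with ⟨h1, h2⟩ | ⟨h1, h2⟩
      · rw [if_pos h1]; exact h2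
      · rw [if_neg (by rw [h1]; exact hki)]; exact h1
    · intro e _; rfl
  · rw [if_neg hij]
    have step1 : ∑ e : ι, incB e1 e2 i e * incB e1 e2 j e * g (e1 e) (e2 e) =
        ∑ e ∈ Finset.univ.filter
          (fun e => (e1 e = i ∧ e2 e = j) ∨ (e1 e = j ∧ e2 e = i)), -(g i j) := by
      rw [Finset.sum_filter]
      refine Finset.sum_congr rfl fun e _ => ?_
      by_cases hp : (e1 e = i ∧ e2 e = j) ∨ (e1 e = j ∧ e2 e = i)
      · rw [if_pos hp]
        rcases hp with ⟨h1, h2⟩ | ⟨h1, h2⟩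
        · have hji : j ≠ e1 e := by rw [h1]; exact fun h => hij h.symm
          simp only [incB, Matrix.of_apply, if_pos h1.symm, if_neg hji, if_pos h2.symm]
          rw [h1, h2]; ring
        · have hie1 : i ≠ e1 e := by rw [h1]; exact hij
          simp only [incB, Matrix.of_apply, if_neg hie1, if_pos h2.symm, if_pos h1.symm]
          rw [h1, h2, hg]; ring
      · rw [if_neg hp]
        push_neg at hp
        by_cases h1 : e1 e = i
        · have hje1 : j ≠ e1 e := by rw [h1]; exact fun h => hij h.symm
          have hje2 : j ≠ e2 e := fun h => hp.1 h1 h.symm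
          simp [incB, hje1, hje2]
        · by_cases h2 : e2 e = i
          · have hje1 : j ≠ e1 e := fun h => hp.2 h.symm h2
            have hje2 : j ≠ e2 e := by rw [h2]; exact fun h => hij h.symm
            simp [incB, hje1, hje2]
          · have hi1 : i ≠ e1 e := fun h => h1 h.symm
            have hi2 : i ≠ e2 e := fun h => h2 h.symm
            simp [incB, hi1, hi2, h1, h2]
    rw [step1]
    by_cases hA : Adj i j = true
    · rw [if_pos hA]
      have hset : Finset.univ.filter
          (fun e => (e1 e = i ∧ e2 e = j) ∨ (e1 e = j ∧ e2 e = i)) =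
          {(huniq i j hA).choose} := by
        ext e
        simp only [Finset.mem_filter, Finset.mem_univ, true_and, Finset.mem_singleton]
        constructor
        · exact fun h => (huniq i j hA).choose_spec.2 e h
        · rintro rfl; exact (huniq i j hA).choose_spec.1
      rw [hset, Finset.sum_singleton]
    · rw [if_neg hA]
      have hset : Finset.univ.filter
          (fun e => (e1 e = i ∧ e2 e = j) ∨ (e1 e = j ∧ e2 e = i)) = ∅ := by
        ext e
        simp only [Finset.mem_filter, Finset.mem_univ, true_and, Finset.notMem_empty,
          iff_false]
        rintro (⟨h1, h2⟩ | ⟨h1, h2⟩)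
        · exact hA (by rw [← h1, ← h2]; exact hedge e)
        · exact hA (by rw [← h1, ← h2, ← hsym]; exact hedge e)
      rw [hset, Finset.sum_empty]

lemma edist2_comm {N : ℕ} (x y : Fin N → ℝ) (a b : Fin N) :
    edist2 x y a b = edist2 x y b a := by
  unfold edist2; congr 1; ring

lemma Fbar1_apply {N : ℕ} (x y : Fin N → ℝ) (Adj : Fin N → Fin N → Bool) (σ α : ℝ)
    (μ ν : Fin 2) (i j : Fin N) :
    Fbar1 x y Adj σ α (μ, i) (ν, j) = fimBlock x y Adj σ α i j μ ν := by
  simp [Fbar1, Matrix.mul_apply, permP, Fbar, Fintype.sum_prod_type, Prod.ext_iff,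
    ite_and, Finset.sum_ite_eq, Finset.sum_ite_eq']

lemma RHS_apply {N : ℕ} (x y : Fin N → ℝ) (σ α : ℝ) {ι : Type*} [Fintype ι] [DecidableEq ι]
    (e1 e2 : ι → Fin N) (μ ν : Fin 2) (i j : Fin N) :
    (((1 : Matrix (Fin 2) (Fin 2) ℝ) ⊗ₖ incB e1 e2) * Qmat x y σ α e1 e2 *
        ((1 : Matrix (Fin 2) (Fin 2) ℝ) ⊗ₖ (incB e1 e2)ᵀ)) (μ, i) (ν, j) =
      ∑ e : ι, incB e1 e2 i e * incB e1 e2 j e *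
        ((![x, y] μ (e1 e) - ![x, y] μ (e2 e)) * (![x, y] ν (e1 e) - ![x, y] ν (e2 e)) /
          (σ ^ 2 * edist2 x y (e1 e) (e2 e) ^ (2 * α))) := by
  simp [Matrix.mul_apply, Qmat, Matrix.one_apply, Fintype.sum_prod_type, ite_and,
    Finset.sum_ite_eq, Finset.sum_ite_eq', Finset.mul_sum, Finset.sum_mul,
    mul_comm, mul_assoc, mul_left_comm]

lemma offBlock_apply {N : ℕ} (x y : Fin N → ℝ) (Adj : Fin N → Fin N → Bool) (σ α : ℝ)
    (a b : Fin N) (μ ν : Fin 2) :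
    offBlock x y Adj σ α a b μ ν =
      -((if Adj a b then (1 : ℝ) else 0) *
        ((![x, y] μ a - ![x, y] μ b) * (![x, y] ν a - ![x, y] ν b) /
          (σ ^ 2 * edist2 x y a b ^ (2 * α)))) := by
  fin_cases μ <;> fin_cases ν <;>
    simp [offBlock, Matrix.smul_apply, div_eq_mul_inv] <;> ring

/-- `F̄₁(p) = (I₂ ⊗ B) Q(p) (I₂ ⊗ Bᵀ)`. -/
theorem fbar1_eq_kronecker_incidence
    (n m : ℕ) (x y : Fin (n + m) → ℝ) (Adj : Fin (n + m) → Fin (n + m) → Bool)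
    (hsym : ∀ i j, Adj i j = Adj j i) (hirr : ∀ i, Adj i i = false)
    (hne : ∀ i j, Adj i j = true → (x i, y i) ≠ (x j, y j))
    (σ α : ℝ) (hσ : 0 < σ)
    {ι : Type*} [Fintype ι] [DecidableEq ι]
    (e1 e2 : ι → Fin (n + m))
    (hedge : ∀ e : ι, Adj (e1 e) (e2 e) = true)
    (huniq : ∀ i j, Adj i j = true →
      ∃! e : ι, (e1 e = i ∧ e2 e = j) ∨ (e1 e = j ∧ e2 e = i)) :
    Fbar1 x y Adj σ α =
      ((1 : Matrix (Fin 2) (Fin 2) ℝ) ⊗ₖ incB e1 e2) * Qmat x y σ α e1 e2 *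
        ((1 : Matrix (Fin 2) (Fin 2) ℝ) ⊗ₖ (incB e1 e2)ᵀ) := by
  ext ⟨μ, i⟩ ⟨ν, j⟩
  rw [Fbar1_apply, RHS_apply]
  set g : Fin (n + m) → Fin (n + m) → ℝ := fun a b =>
    (![x, y] μ a - ![x, y] μ b) * (![x, y] ν a - ![x, y] ν b) /
      (σ ^ 2 * edist2 x y a b ^ (2 * α)) with hgdef
  have hg : ∀ a b, g a b = g b a := by
    intro a b
    simp only [hgdef, edist2_comm x y a b]
    ring
  rw [show (∑ e : ι, incB e1 e2 i e * incB e1 e2 j e *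
        ((![x, y] μ (e1 e) - ![x, y] μ (e2 e)) * (![x, y] ν (e1 e) - ![x, y] ν (e2 e)) /
          (σ ^ 2 * edist2 x y (e1 e) (e2 e) ^ (2 * α)))) =
      ∑ e : ι, incB e1 e2 i e * incB e1 e2 j e * g (e1 e) (e2 e) from rfl,
    sum_edges Adj hsym hirr e1 e2 hedge huniq g hg i j]
  by_cases hij : i = j
  · subst hij
    rw [if_pos rfl, fimBlock, if_pos rfl]
    simp only [Matrix.neg_apply, Matrix.sum_apply]
    have hterm : ∀ k ∈ Finset.univ.filter (fun k => Adj i k = true),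
        offBlock x y Adj σ α i k μ ν = -(g i k) := by
      intro k hk
      simp only [Finset.mem_filter, Finset.mem_univ, true_and] at hk
      rw [offBlock_apply, if_pos hk, one_mul]
    rw [Finset.sum_congr rfl hterm, Finset.sum_neg_distrib, neg_neg]
  · rw [if_neg hij, fimBlock, if_neg hij, offBlock_apply]
    by_cases hA : Adj i j
    · rw [if_pos hA, if_pos hA, one_mul]
    · rw [if_neg hA, if_neg hA, zero_mul, neg_zero]
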